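/- Let α₁ > 1/3 and set β₁ = (3α₁ - 1)/12. Define c⁽¹⁾ = 6α₁/(3α₁-1) - √2·√(7 - 24α₁ + 27α₁²)/√(1 - 6α₁ + 9α₁²) and c⁽²⁾ = 6α₁/(3α₁-1) + √2·√(7 - 24α₁ + 27α₁²)/√(1 - 6α₁ + 9α₁²) (assuming α₁ ≠ 1/3 so the denominator is nonzero). Then the N×N circulant five-diagonal matrix W̃₁ with symbol (β₁z⁻² + α₁z⁻¹ + 1 + α₁z + β₁z²)/(1 + 2α₁ + 2β₁) factors as the product of the circulant tridiagonal matrices (1/(c⁽¹⁾+2))·circ(c⁽¹⁾,1,0,…,0,1) and (1/(c⁽²⁾+2))·circ(c⁽²⁾,1,0,…,0,1). Equivalently, for all real z with |z|=1 (as a symbol identity): (β₁z⁻² + α₁z⁻¹ + 1 + α₁z + β₁z²)/(1 + 2α₁ + 2β₁) = ((z⁻¹ + c⁽¹⁾ + z)/(c⁽¹⁾+2))·((z⁻¹ + c⁽²⁾ + z)/(c⁽²⁾+2)). -/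

import Mathlib

theorem stmt_11 (a1 b1 c1 c2 : ℝ) (ha : 1 / 3 < a1)
    (hb : b1 = (3 * a1 - 1) / 12)
    (hc1 : c1 = 6 * a1 / (3 * a1 - 1)
      - Real.sqrt 2 * Real.sqrt (7 - 24 * a1 + 27 * a1 ^ 2)
          / Real.sqrt (1 - 6 * a1 + 9 * a1 ^ 2))
    (hc2 : c2 = 6 * a1 / (3 * a1 - 1)
      + Real.sqrt 2 * Real.sqrt (7 - 24 * a1 + 27 * a1 ^ 2)
          / Real.sqrt (1 - 6 * a1 + 9 * a1 ^ 2)) :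
    ∀ z : ℝ, z ≠ 0 →
      (b1 * z⁻¹ ^ 2 + a1 * z⁻¹ + 1 + a1 * z + b1 * z ^ 2) / (1 + 2 * a1 + 2 * b1)
        = ((z⁻¹ + c1 + z) / (c1 + 2)) * ((z⁻¹ + c2 + z) / (c2 + 2)) := by
  have hd : (0:ℝ) < 3 * a1 - 1 := by linarith
  have hd' : (3 * a1 - 1) ≠ 0 := ne_of_gt hd
  have hsq : Real.sqrt (1 - 6 * a1 + 9 * a1 ^ 2) = 3 * a1 - 1 := by
    have : 1 - 6 * a1 + 9 * a1 ^ 2 = (3 * a1 - 1) ^ 2 := by ring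
    rw [this, Real.sqrt_sq hd.le]
  have h7 : (0:ℝ) ≤ 7 - 24 * a1 + 27 * a1 ^ 2 := by nlinarith [sq_nonneg (9 * a1 - 4)]
  set t := Real.sqrt 2 * Real.sqrt (7 - 24 * a1 + 27 * a1 ^ 2) with htdef
  have ht2 : t ^ 2 = 2 * (7 - 24 * a1 + 27 * a1 ^ 2) := by
    rw [htdef, mul_pow, Real.sq_sqrt (by norm_num : (0:ℝ) ≤ 2), Real.sq_sqrt h7]
  have hc1' : c1 = (6 * a1 - t) / (3 * a1 - 1) := by
    rw [hc1, hsq]; field_simp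
  have hc2' : c2 = (6 * a1 + t) / (3 * a1 - 1) := by
    rw [hc2, hsq]; field_simp
  have hsum : c1 + c2 = 12 * a1 / (3 * a1 - 1) := by
    rw [hc1', hc2']; field_simp; ring
  have hprod : c1 * c2 = (-18 * a1 ^ 2 + 48 * a1 - 14) / (3 * a1 - 1) ^ 2 := by
    rw [hc1', hc2']
    rw [div_mul_div_comm]
    congr 1
    · linear_combination -ht2
    · ring
  have hden : (c1 + 2) * (c2 + 2) = 10 * (3 * a1 + 1) / (3 * a1 - 1) := by
    have : (c1 + 2) * (c2 + 2) = c1 * c2 + 2 * (c1 + c2) + 4 := by ring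
    rw [this, hprod, hsum]
    have h3 : a1 * 3 - 1 ≠ 0 := by intro h; linarith
    field_simp
    ring
  have hdenne : 10 * (3 * a1 + 1) / (3 * a1 - 1) ≠ 0 := by
    apply div_ne_zero (by nlinarith) hd'
  have hlhsden : (1 + 2 * a1 + 2 * b1) ≠ 0 := by
    rw [hb]; intro h; nlinarith [h]
  intro z hz
  rw [div_mul_div_comm, hden]
  have key : (z⁻¹ + c1 + z) * (z⁻¹ + c2 + z)
      = (z⁻¹ + z) ^ 2 + (12 * a1 / (3 * a1 - 1)) * (z⁻¹ + z)
        + (-18 * a1 ^ 2 + 48 * a1 - 14) / (3 * a1 - 1) ^ 2 := by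
    linear_combination (z⁻¹ + z) * hsum + hprod
  rw [key, hb]
  field_simp
  ring
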